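/- For any real numbers a, b ≥ 0, any ε ∈ (0,1], and any real p ≥ 1, (a+b)^p ≤ (1+ε)·a^p + (1 + 2p/ε)^p · b^p. -/

import Mathlib

/-- For any reals `a, b ≥ 0`, `ε ∈ (0,1]`, and real `p ≥ 1`,
`(a+b)^p ≤ (1+ε)·a^p + (1 + 2p/ε)^p · b^p`. -/
theorem pow_add_le_of_eps (a b ε p : ℝ) (ha : 0 ≤ a) (hb : 0 ≤ b)
    (hε : 0 < ε) (hε1 : ε ≤ 1) (hp : 1 ≤ p) :
    (a + b) ^ p ≤ (1 + ε) * a ^ p + (1 + 2 * p / ε) ^ p * b ^ p := by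
  have hp0 : 0 < p := lt_of_lt_of_le one_pos hp
  have h2p : 0 < 2 * p := by linarith
  by_cases h : b ≤ ε / (2 * p) * a
  · -- b small: a + b ≤ a * (1 + ε/(2p))
    set t : ℝ := ε / (2 * p) with ht
    have ht0 : 0 < t := by positivity
    have key : (1 + t) ^ p ≤ 1 + ε := by
      have hpos : (0:ℝ) < 1 + t := by linarith
      have hlog : Real.log (1 + t) ≤ t := by
        have := Real.log_le_sub_one_of_pos hpos
        linarith
      have h1 : (1 + t) ^ p ≤ Real.exp (t * p) := by
        rw [Real.rpow_def_of_pos hpos]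
        exact Real.exp_le_exp.2 (mul_le_mul_of_nonneg_right hlog hp0.le)
      have htp : t * p = ε / 2 := by
        field_simp [ht]
        rw [ht, div_mul_eq_mul_div, div_mul_eq_mul_div, div_eq_iff (by positivity)]; ring
      rw [htp] at h1
      have h2 : Real.exp (ε / 2) ≤ 1 + ε := by
        have h3 : -(ε / 2) + 1 ≤ Real.exp (-(ε / 2)) := Real.add_one_le_exp _
        rw [Real.exp_neg] at h3
        have hE : 0 < Real.exp (ε / 2) := Real.exp_pos _
        have h4 : (1 - ε / 2) * Real.exp (ε / 2) ≤ 1 := by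
          have := mul_le_mul_of_nonneg_right h3 hE.le
          rwa [inv_mul_cancel₀ hE.ne', show -(ε/2) + 1 = 1 - ε/2 by ring] at this
        nlinarith [hE]
      linarith
    have hab : a + b ≤ a * (1 + t) := by nlinarith
    calc (a + b) ^ p ≤ (a * (1 + t)) ^ p :=
          Real.rpow_le_rpow (by linarith) hab hp0.le
      _ = a ^ p * (1 + t) ^ p := Real.mul_rpow ha (by linarith)
      _ ≤ a ^ p * (1 + ε) := by
          exact mul_le_mul_of_nonneg_left key (Real.rpow_nonneg ha p)
      _ ≤ (1 + ε) * a ^ p + (1 + 2 * p / ε) ^ p * b ^ p := by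
          have h5 : 0 ≤ (1 + 2 * p / ε) ^ p * b ^ p := by positivity
          linarith [mul_comm (a ^ p) (1 + ε)]
  · push_neg at h
    have ha' : a < 2 * p / ε * b := by
      have := mul_lt_mul_of_pos_left h (by positivity : (0:ℝ) < 2 * p / ε)
      calc a = 2 * p / ε * (ε / (2 * p) * a) := by field_simp
        _ < 2 * p / ε * b := this
    have hab : a + b ≤ (1 + 2 * p / ε) * b := by nlinarith
    have h1 : (a + b) ^ p ≤ ((1 + 2 * p / ε) * b) ^ p :=
      Real.rpow_le_rpow (by linarith) hab hp0.le
    rw [Real.mul_rpow (by positivity) hb] at h1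
    have h2 : 0 ≤ (1 + ε) * a ^ p := by positivity
    linarith
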